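/- Let M be an m×m symmetric positive definite real matrix, b ∈ ℝᵐ, and consider the linear system (in block form) [[M₁₁ + P₁, M₁₂],[M₁₂ᵀ, M₂₂ + P₂]] (α*, γ*)ᵀ = (b₁, b₂)ᵀ, where P₁, P₂ are symmetric positive definite diagonal blocks depending continuously on parameters. If P₁ = λD₁(α) with D₁(α) = diag(α_j⁻²) and P₂ = λD₂(γ) with D₂(γ) = diag(γ_ℓ⁻²), then as γ → 0 (componentwise, with γ_ℓ ≠ 0), the solution satisfies γ*(α, γ) → 0 and α*(α, γ) → (M₁₁ + λD₁(α))⁻¹ b₁. -/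

import Mathlib

open Matrix

/-- Solution of the penalized block linear system
`(M + λ·diag(α₁⁻², …, γ₁⁻², …)) (α*, γ*)ᵀ = b`. -/
noncomputable def sol {q r : ℕ} (M : Matrix (Fin q ⊕ Fin r) (Fin q ⊕ Fin r) ℝ)
    (b : Fin q ⊕ Fin r → ℝ) (lam : ℝ) (α : Fin q → ℝ) (γ : Fin r → ℝ) :
    Fin q ⊕ Fin r → ℝ :=
  (M + lam • Matrix.diagonal
      (Sum.elim (fun j => 1 / (α j) ^ 2) (fun ℓ => 1 / (γ ℓ) ^ 2)))⁻¹.mulVec b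

/-- The oracle update `(M₁₁ + λ D₁(α))⁻¹ b₁`. -/
noncomputable def oracleSol {q r : ℕ} (M : Matrix (Fin q ⊕ Fin r) (Fin q ⊕ Fin r) ℝ)
    (b : Fin q ⊕ Fin r → ℝ) (lam : ℝ) (α : Fin q → ℝ) : Fin q → ℝ :=
  (M.toBlocks₁₁ + lam • Matrix.diagonal fun j => 1 / (α j) ^ 2)⁻¹.mulVec
    (fun j => b (Sum.inl j))

set_option maxHeartbeats 1000000 in
/-- As `γ → 0` (through vectors with all components nonzero), the solution of the
penalized block system satisfies `γ*(α, γ) → 0` and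
`α*(α, γ) → (M₁₁ + λ D₁(α))⁻¹ b₁`. -/
theorem stmt18 {q r : ℕ} (M : Matrix (Fin q ⊕ Fin r) (Fin q ⊕ Fin r) ℝ)
    (hM : M.PosDef) (b : Fin q ⊕ Fin r → ℝ) (lam : ℝ) (hlam : 0 < lam)
    (α : Fin q → ℝ) (hα : ∀ j, α j ≠ 0) :
    Filter.Tendsto
        (fun γ : EuclideanSpace ℝ (Fin r) =>
          (WithLp.toLp 2 (fun i => sol M b lam α γ (Sum.inr i)) : EuclideanSpace ℝ (Fin r)))
        (nhdsWithin 0 {γ | ∀ ℓ, γ ℓ ≠ 0}) (nhds 0) ∧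
    Filter.Tendsto
        (fun γ : EuclideanSpace ℝ (Fin r) =>
          (WithLp.toLp 2 (fun j => sol M b lam α γ (Sum.inl j)) : EuclideanSpace ℝ (Fin q)))
        (nhdsWithin 0 {γ | ∀ ℓ, γ ℓ ≠ 0})
        (nhds (WithLp.toLp 2 (oracleSol M b lam α) : EuclideanSpace ℝ (Fin q))) := by
  classical
  set S : Set (EuclideanSpace ℝ (Fin r)) := {γ | ∀ ℓ, γ ℓ ≠ 0} with hS
  set A1 : Matrix (Fin q) (Fin q) ℝ :=
    M.toBlocks₁₁ + lam • Matrix.diagonal fun j => 1 / (α j) ^ 2 with hA1def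
  -- M₁₁ is positive definite
  have hM11 : M.toBlocks₁₁.PosDef := by
    refine Matrix.PosDef.of_dotProduct_mulVec_pos ?_ ?_
    · exact hM.1.submatrix Sum.inl
    · intro x hx
      have hy : (Sum.elim x 0 : Fin q ⊕ Fin r → ℝ) ≠ 0 := by
        intro h; apply hx; ext j; exact congrFun h (Sum.inl j)
      have h2 := hM.dotProduct_mulVec_pos hy
      convert h2 using 1
      simp [dotProduct, Matrix.mulVec, Fintype.sum_sum_type, Matrix.toBlocks₁₁]
  have hA1 : A1.PosDef := by
    refine hM11.add_posSemidef ?_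
    rw [← Matrix.diagonal_smul]
    refine Matrix.posSemidef_diagonal_iff.2 fun j => ?_
    simp only [Pi.smul_apply, smul_eq_mul]
    positivity
  have hA1u : IsUnit A1.det := hA1.det_pos.ne'.isUnit
  set e : EuclideanSpace ℝ (Fin r) → (Fin q ⊕ Fin r) → ℝ :=
    fun γ => Sum.elim (fun _ => (1 : ℝ)) (fun ℓ => (γ ℓ) ^ 2) with he
  set F : EuclideanSpace ℝ (Fin r) → Matrix (Fin q ⊕ Fin r) (Fin q ⊕ Fin r) ℝ :=
    fun γ => Matrix.diagonal (e γ) * M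
      + lam • Matrix.diagonal (Sum.elim (fun j => 1 / (α j) ^ 2) fun _ => 1) with hF
  set c : EuclideanSpace ℝ (Fin r) → (Fin q ⊕ Fin r) → ℝ := fun γ i => e γ i * b i with hc
  have h0app : ∀ ℓ, (0 : EuclideanSpace ℝ (Fin r)) ℓ = 0 := fun _ => rfl
  have hF0 : F 0 = Matrix.fromBlocks A1 M.toBlocks₁₂ 0 (lam • 1) := by
    ext i k
    rcases i with j | ℓ <;> rcases k with j' | ℓ' <;>
      simp [hF, he, hA1def, Matrix.fromBlocks, Matrix.add_apply, Matrix.diagonal_mul,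
        Matrix.diagonal_apply, Matrix.toBlocks₁₁, Matrix.toBlocks₁₂, Matrix.one_apply,
        h0app, Matrix.smul_apply, Sum.inl.injEq, Sum.inr.injEq]
  have hdet0 : IsUnit (F 0).det := by
    rw [hF0, Matrix.det_fromBlocks_zero₂₁]
    refine (IsUnit.mul hA1.det_pos.ne'.isUnit ?_)
    rw [Matrix.det_smul, Matrix.det_one]
    exact (by positivity : (0:ℝ) < lam ^ (Fintype.card (Fin r)) * 1).ne'.isUnit
  -- continuity
  have hecont : Continuous e := continuous_pi fun i => by
    cases i with
    | inl j => exact continuous_const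
    | inr ℓ => exact ((PiLp.continuous_apply 2 (fun _ : Fin r => ℝ) ℓ).pow 2 :)
  have hFcont : Continuous F := (hecont.matrix_diagonal.mul continuous_const).add continuous_const
  have hccont : Continuous c :=
    continuous_pi fun i => ((continuous_apply i).comp hecont).mul continuous_const
  have hRinv : ContinuousAt Ring.inverse (F 0).det := NormedRing.inverse_continuousAt hdet0.unit
  have hinv : ContinuousAt (fun γ => (F γ)⁻¹) 0 :=
    (continuousAt_matrix_inv (F 0) hRinv).comp hFcont.continuousAt
  have hmv : Continuous fun p : Matrix (Fin q ⊕ Fin r) (Fin q ⊕ Fin r) ℝ ×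
      ((Fin q ⊕ Fin r) → ℝ) => p.1.mulVec p.2 :=
    Continuous.matrix_mulVec continuous_fst continuous_snd
  have hg : ContinuousAt (fun γ => (F γ)⁻¹.mulVec (c γ)) 0 :=
    hmv.continuousAt.comp (f := fun γ => ((F γ)⁻¹, c γ)) (hinv.prodMk hccont.continuousAt)
  -- the limit point
  set x₀ : (Fin q ⊕ Fin r) → ℝ := Sum.elim (oracleSol M b lam α) 0 with hx₀def
  have hc0 : c 0 = Sum.elim (fun j => b (Sum.inl j)) 0 := by
    ext i; cases i with
    | inl j => simp [hc, he]
    | inr ℓ => simp [hc, he, h0app]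
  have hFv : (F 0).mulVec x₀ = c 0 := by
    rw [hF0, Matrix.fromBlocks_mulVec, hc0]
    have h1 : (x₀ ∘ Sum.inl) = oracleSol M b lam α := rfl
    have h2 : (x₀ ∘ Sum.inr) = (0 : Fin r → ℝ) := rfl
    rw [h1, h2]
    simp only [Matrix.mulVec_zero, add_zero, Matrix.zero_mulVec, zero_add]
    unfold oracleSol
    rw [Matrix.mulVec_mulVec, ← hA1def, Matrix.mul_nonsing_inv _ hA1u, Matrix.one_mulVec]
  have hx0 : (F 0)⁻¹.mulVec (c 0) = x₀ := by
    rw [← hFv, Matrix.mulVec_mulVec, Matrix.nonsing_inv_mul _ hdet0, Matrix.one_mulVec]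
  have hlim : Filter.Tendsto (fun γ => (F γ)⁻¹.mulVec (c γ)) (nhdsWithin 0 S) (nhds x₀) := by
    rw [← hx0]
    exact hg.tendsto.mono_left nhdsWithin_le_nhds
  -- on S, the continuous surrogate equals `sol`
  have heq : ∀ γ ∈ S, (F γ)⁻¹.mulVec (c γ) = sol M b lam α γ := by
    intro γ hγ
    have hγ' : ∀ ℓ, γ ℓ ≠ 0 := hγ
    set A : Matrix (Fin q ⊕ Fin r) (Fin q ⊕ Fin r) ℝ :=
      M + lam • Matrix.diagonal
        (Sum.elim (fun j => 1 / (α j) ^ 2) (fun ℓ => 1 / (γ ℓ) ^ 2)) with hAdef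
    have hApd : A.PosDef := by
      refine hM.add_posSemidef ?_
      rw [← Matrix.diagonal_smul]
      refine Matrix.posSemidef_diagonal_iff.2 fun i => ?_
      cases i with
      | inl j =>
        have := hα j
        simp only [Pi.smul_apply, smul_eq_mul, Sum.elim_inl]
        positivity
      | inr ℓ =>
        have := hγ' ℓ
        simp only [Pi.smul_apply, smul_eq_mul, Sum.elim_inr]
        positivity
    have hAu : IsUnit A.det := hApd.det_pos.ne'.isUnit
    have hEu : IsUnit (Matrix.diagonal (e γ)).det := by
      rw [Matrix.det_diagonal]
      refine (Finset.prod_ne_zero_iff.2 fun i _ => ?_).isUnit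
      cases i with
      | inl j => exact one_ne_zero
      | inr ℓ => exact pow_ne_zero 2 (hγ' ℓ)
    have hFγ : F γ = Matrix.diagonal (e γ) * A := by
      rw [hAdef, Matrix.mul_add]
      ext i k
      rcases i with j | ℓ <;> rcases k with j' | ℓ' <;>
        simp [hF, he, Matrix.add_apply, Matrix.diagonal_mul, Matrix.diagonal_apply,
          Matrix.smul_apply, Sum.inl.injEq, Sum.inr.injEq]
      · rcases eq_or_ne ℓ ℓ' with rfl | hne
        · rw [mul_inv_cancel₀ (pow_ne_zero 2 (hγ' ℓ))]; simp
        · simp [hne]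
    have hc' : c γ = (Matrix.diagonal (e γ)).mulVec b := by
      ext i; simp [hc, Matrix.mulVec_diagonal]
    rw [hFγ, Matrix.mul_inv_rev, hc', Matrix.mulVec_mulVec, Matrix.mul_assoc,
      Matrix.nonsing_inv_mul _ hEu, Matrix.mul_one]
    rfl
  have key : Filter.Tendsto (fun γ : EuclideanSpace ℝ (Fin r) => sol M b lam α γ) (nhdsWithin 0 S) (nhds x₀) := by
    refine hlim.congr' ?_
    filter_upwards [self_mem_nhdsWithin] with γ hγ
    exact heq γ hγ
  constructor
  · have hcont : Continuous fun v : (Fin q ⊕ Fin r → ℝ) =>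
        (WithLp.toLp 2 (fun i => v (Sum.inr i)) : EuclideanSpace ℝ (Fin r)) :=
      Continuous.comp (EuclideanSpace.equiv (Fin r) ℝ).symm.continuous
        (continuous_pi fun i => continuous_apply (Sum.inr i))
    have h := (hcont.tendsto x₀).comp key
    have hz : (WithLp.toLp 2 (fun i => x₀ (Sum.inr i)) : EuclideanSpace ℝ (Fin r)) = 0 := rfl
    rw [hz] at h
    exact h
  · have hcont : Continuous fun v : (Fin q ⊕ Fin r → ℝ) =>
        (WithLp.toLp 2 (fun j => v (Sum.inl j)) : EuclideanSpace ℝ (Fin q)) :=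
      Continuous.comp (EuclideanSpace.equiv (Fin q) ℝ).symm.continuous
        (continuous_pi fun j => continuous_apply (Sum.inl j))
    have h := (hcont.tendsto x₀).comp key
    have hz : (WithLp.toLp 2 (fun j => x₀ (Sum.inl j)) : EuclideanSpace ℝ (Fin q)) =
        (WithLp.toLp 2 (oracleSol M b lam α) : EuclideanSpace ℝ (Fin q)) := rfl
    rw [hz] at h
    exact h
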